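/- If n has exactly two distinct prime factors p and q, then the vectors v^(p)_i for 0 ≤ i ≤ n_p - 1 together with v^(q)_i for 0 ≤ i ≤ n_q - n_{pq} - 1 form a basis of the ℚ-vector space V_n. -/

import Mathlib

-- helpers assumed (will concat)

/-- The `k`-th standard basis vector of `ℚ^n`. -/
def stdVecQ (n : ℕ) (k : ℕ) : Fin n → ℚ := fun m => if (m : ℕ) = k then 1 else 0

/-- `v^(d)_i = ∑_{j=0}^{d-1} e_{i + (n/d) j}` in `ℚ^n`. -/
def cycVecQ (n d : ℕ) (i : ℕ) : Fin n → ℚ := ∑ j ∈ Finset.range d, stdVecQ n (i + (n / d) * j)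

lemma sum_std (n k : ℕ) (hk : k < n) (ζ : ℂ) :
    ∑ x : Fin n, ((stdVecQ n k x : ℚ) : ℂ) * ζ ^ (x : ℕ) = ζ ^ k := by
  rw [Finset.sum_eq_single (⟨k, hk⟩ : Fin n)]
  · simp [stdVecQ]
  · intro b _ hb
    have : (b : ℕ) ≠ k := fun h => hb (Fin.ext h)
    simp [stdVecQ, this]
  · intro h; exact absurd (Finset.mem_univ _) h

lemma cycVecQ_apply (n d i : ℕ) (hd : 0 < d) (hdn : d ∣ n) (hi : i < n / d) (x : Fin n) :
    cycVecQ n d i x = if (x : ℕ) % (n / d) = i then 1 else 0 := by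
  have hn : 0 < n := x.pos
  have hnd0 : 0 < n / d := Nat.div_pos (Nat.le_of_dvd hn hdn) hd
  have hmul : n / d * d = n := Nat.div_mul_cancel hdn
  have hxdiv : (x : ℕ) / (n / d) < d := Nat.div_lt_of_lt_mul (by rw [hmul]; exact x.2)
  have key : ∀ j, ((x : ℕ) = i + n / d * j ↔ ((x : ℕ) % (n / d) = i ∧ (x : ℕ) / (n / d) = j)) := by
    intro j
    constructor
    · rintro h
      rw [h]
      constructor
      · rw [Nat.add_mul_mod_self_left, Nat.mod_eq_of_lt hi]
      · rw [Nat.add_mul_div_left _ _ hnd0, Nat.div_eq_of_lt hi, Nat.zero_add]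
    · rintro ⟨h1, h2⟩
      rw [← h1, ← h2, Nat.mod_add_div]
  simp only [cycVecQ, stdVecQ, Finset.sum_apply]
  calc (∑ j ∈ Finset.range d, if (x : ℕ) = i + n / d * j then (1 : ℚ) else 0)
      = ∑ j ∈ Finset.range d,
          if ((x : ℕ) % (n / d) = i ∧ (x : ℕ) / (n / d) = j) then (1 : ℚ) else 0 :=
        Finset.sum_congr rfl fun j _ => if_congr (key j) rfl rfl
    _ = if (x : ℕ) % (n / d) = i then 1 else 0 := by
        by_cases hP : (x : ℕ) % (n / d) = i
        · simp only [hP, true_and, if_pos]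
          rw [Finset.sum_ite_eq (Finset.range d) _ (fun _ => (1 : ℚ))]
          simp [Finset.mem_range.mpr hxdiv]
        · simp [hP]

lemma cyc_sum_zero (n d i : ℕ) (hn : 0 < n) (hd : 1 < d) (hdn : d ∣ n) (hi : i < n / d)
    (ζ : ℂ) (hζ : IsPrimitiveRoot ζ n) :
    ∑ x : Fin n, ((cycVecQ n d i x : ℚ) : ℂ) * ζ ^ (x : ℕ) = 0 := by
  have hd0 : 0 < d := one_pos.trans hd
  have hmul : n = n / d * d := (Nat.div_mul_cancel hdn).symm
  have hterm : ∀ j < d, i + n / d * j < n := by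
    intro j hj
    have h1 : i + n / d * j < n / d * (j + 1) := by
      have : n / d * (j + 1) = n / d + n / d * j := by ring
      omega
    have h2 : n / d * (j + 1) ≤ n / d * d := Nat.mul_le_mul_left _ hj
    omega
  have step1 : ∀ x : Fin n, ((cycVecQ n d i x : ℚ) : ℂ) * ζ ^ (x : ℕ)
      = ∑ j ∈ Finset.range d, ((stdVecQ n (i + n / d * j) x : ℚ) : ℂ) * ζ ^ (x : ℕ) := by
    intro x
    rw [cycVecQ, Finset.sum_apply]
    push_cast
    rw [Finset.sum_mul]
  rw [Finset.sum_congr rfl fun x _ => step1 x, Finset.sum_comm]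
  rw [Finset.sum_congr rfl fun j hj => sum_std n _ (hterm j (Finset.mem_range.1 hj)) ζ]
  have : ∀ j ∈ Finset.range d, ζ ^ (i + n / d * j) = ζ ^ i * (ζ ^ (n / d)) ^ j := by
    intro j _; rw [pow_add, pow_mul]
  rw [Finset.sum_congr rfl this, ← Finset.mul_sum, (hζ.pow hn hmul).geom_sum_eq_zero hd,
    mul_zero]

lemma sum_pick {N : ℕ} (g : Fin N → ℚ) (r : ℕ) (hr : r < N) :
    ∑ i : Fin N, g i * (if r = (i : ℕ) then 1 else 0) = g ⟨r, hr⟩ := by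
  rw [Finset.sum_eq_single (⟨r, hr⟩ : Fin N)]
  · simp
  · intro b _ hb
    have : r ≠ (b : ℕ) := fun h => hb (Fin.ext h.symm)
    simp [this]
  · intro h; exact absurd (Finset.mem_univ _) h

lemma sum_pick_zero {N : ℕ} (g : Fin N → ℚ) (r : ℕ) (hr : ¬ r < N) :
    ∑ i : Fin N, g i * (if r = (i : ℕ) then 1 else 0) = 0 := by
  apply Finset.sum_eq_zero
  intro b _
  have : r ≠ (b : ℕ) := fun h => hr (h ▸ b.2)
  simp [this]

theorem stmt9 (n p q : ℕ) (hn : 0 < n) (hp : p.Prime) (hq : q.Prime) (hne : p ≠ q)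
    (hfac : n.primeFactors = {p, q})
    (ζ : ℂ) (hζ : IsPrimitiveRoot ζ n)
    (V : Submodule ℚ (Fin n → ℚ))
    (hV : ∀ α : Fin n → ℚ, α ∈ V ↔ ∑ i : Fin n, (α i : ℂ) * ζ ^ (i : ℕ) = 0)
    (v : Fin (n / p) ⊕ Fin (n / q - n / (p * q)) → (Fin n → ℚ))
    (hv : v = Sum.elim (fun i : Fin (n / p) => cycVecQ n p (i : ℕ)) (fun i : Fin (n / q - n / (p * q)) => cycVecQ n q (i : ℕ))) :
    LinearIndependent ℚ v ∧ Submodule.span ℚ (Set.range v) = V := by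
  subst hv
  -- divisibility facts
  have hpn : p ∣ n := Nat.dvd_of_mem_primeFactors (hfac ▸ Finset.mem_insert_self p {q})
  have hqn : q ∣ n := Nat.dvd_of_mem_primeFactors
    (hfac ▸ Finset.mem_insert_of_mem (Finset.mem_singleton_self q))
  have hcpq : Nat.Coprime p q := (Nat.coprime_primes hp hq).mpr hne
  -- factorization : n = p^(a+1) * q^(b+1)
  have hfp : 0 < n.factorization p := hp.factorization_pos_of_dvd hn.ne' hpn
  have hfq : 0 < n.factorization q := hq.factorization_pos_of_dvd hn.ne' hqn
  obtain ⟨a, ha⟩ : ∃ a, n.factorization p = a + 1 := ⟨n.factorization p - 1, by omega⟩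
  obtain ⟨b, hb⟩ : ∃ b, n.factorization q = b + 1 := ⟨n.factorization q - 1, by omega⟩
  have hn_eq : n = p ^ (a + 1) * q ^ (b + 1) := by
    have hsupp := Nat.factorization_prod_pow_eq_self hn.ne'
    rw [Finsupp.prod, Nat.support_factorization, hfac, Finset.prod_pair hne, ha, hb] at hsupp
    exact hsupp.symm
  set M : ℕ := p ^ a * q ^ b with hM
  have hM0 : 0 < M := Nat.mul_pos (pow_pos hp.pos a) (pow_pos hq.pos b)
  have hnp : n / p = M * q := by
    have h1 : n = p * (M * q) := by rw [hn_eq, hM]; ring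
    rw [h1, Nat.mul_div_cancel_left _ hp.pos]
  have hnq : n / q = M * p := by
    have h1 : n = q * (M * p) := by rw [hn_eq, hM]; ring
    rw [h1, Nat.mul_div_cancel_left _ hq.pos]
  have hm : n / (p * q) = M := by
    have h1 : n = p * q * M := by rw [hn_eq, hM]; ring
    rw [h1, Nat.mul_div_cancel_left _ (Nat.mul_pos hp.pos hq.pos)]
  have hsub : n / q - n / (p * q) = M * p - M := by rw [hnq, hm]
  -- the key evaluation identity from a linear relation
  -- LINEAR INDEPENDENCE
  have hLI : LinearIndependent ℚ
      (Sum.elim (fun i : Fin (n / p) => cycVecQ n p (i : ℕ))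
        (fun i : Fin (n / q - n / (p * q)) => cycVecQ n q (i : ℕ))) := by
    rw [Fintype.linearIndependent_iff]
    intro g hg
    have key : ∀ x : Fin n,
        (∑ i : Fin (n / p), g (Sum.inl i) * (if (x : ℕ) % (n / p) = (i : ℕ) then 1 else 0)) +
        (∑ i : Fin (n / q - n / (p * q)),
          g (Sum.inr i) * (if (x : ℕ) % (n / q) = (i : ℕ) then 1 else 0)) = 0 := by
      intro x
      have hx := congrFun hg x
      simp only [Finset.sum_apply, Pi.smul_apply, smul_eq_mul, Fintype.sum_sum_type,
        Sum.elim_inl, Sum.elim_inr, Pi.zero_apply] at hx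
      have eA : ∑ i : Fin (n / p), g (Sum.inl i) * (if (x : ℕ) % (n / p) = (i : ℕ) then (1:ℚ) else 0)
          = ∑ i : Fin (n / p), g (Sum.inl i) * cycVecQ n p (i : ℕ) x :=
        Finset.sum_congr rfl fun i _ => by rw [cycVecQ_apply n p i hp.pos hpn i.2 x]
      have eB : ∑ i : Fin (n / q - n / (p * q)), g (Sum.inr i) * (if (x : ℕ) % (n / q) = (i : ℕ) then (1:ℚ) else 0)
          = ∑ i : Fin (n / q - n / (p * q)), g (Sum.inr i) * cycVecQ n q (i : ℕ) x :=
        Finset.sum_congr rfl fun i _ => by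
          rw [cycVecQ_apply n q i hq.pos hqn (lt_of_lt_of_le i.2 (Nat.sub_le _ _)) x]
      rw [eA, eB]
      exact hx
    -- step 1 : all inl coefficients vanish
    have h1 : ∀ i : Fin (n / p), g (Sum.inl i) = 0 := by
      intro i
      have hiq : (i : ℕ) < M * q := by rw [← hnp]; exact i.2
      set r : ℕ := (i : ℕ) % M with hr
      set c : ℕ := (i : ℕ) / M with hc
      have hrM : r < M := Nat.mod_lt _ hM0
      have hco : Nat.Coprime q p := hcpq.symm
      obtain ⟨y0, hy1, hy2⟩ := Nat.chineseRemainder hco c (p - 1)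
      set y : ℕ := y0 % (q * p) with hy
      have hylt : y < q * p := Nat.mod_lt _ (Nat.mul_pos hq.pos hp.pos)
      have hyq : y % q = c := by
        have : y % q = y0 % q := Nat.mod_mod_of_dvd y0 ⟨p, rfl⟩
        rw [this, hy1]
        exact Nat.mod_eq_of_lt (Nat.div_lt_of_lt_mul hiq)
      have hyp : y % p = p - 1 := by
        have : y % p = y0 % p := Nat.mod_mod_of_dvd y0 ⟨q, Nat.mul_comm q p⟩
        rw [this, hy2]
        exact Nat.mod_eq_of_lt (Nat.sub_lt hp.pos one_pos)
      set X : ℕ := M * y + r with hX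
      have hXn : X < n := by
        have h1 : M * y + r < M * (y + 1) := by
          have : M * (y + 1) = M * y + M := by ring
          omega
        have h2 : M * (y + 1) ≤ M * (q * p) := Nat.mul_le_mul_left _ hylt
        have h3 : n = M * (q * p) := by rw [hn_eq, hM]; ring
        omega
      have hMp : M * (p - 1) + M = M * p := by
        have h1 : p - 1 + 1 = p := Nat.succ_pred_eq_of_pos hp.pos
        calc M * (p - 1) + M = M * (p - 1 + 1) := by ring
          _ = M * p := by rw [h1]
      have hXnp : X % (n / p) = (i : ℕ) := by
        conv_lhs => rw [hnp]
        have hdc : y = q * (y / q) + c := by rw [← hyq]; exact (Nat.div_add_mod y q).symm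
        have hXe : X = M * q * (y / q) + (i : ℕ) := by
          have : M * c + r = (i : ℕ) := by
            rw [hc, hr]; exact Nat.div_add_mod (i : ℕ) M
          calc X = M * (q * (y / q) + c) + r := by rw [hX, ← hdc]
            _ = M * q * (y / q) + (M * c + r) := by ring
            _ = M * q * (y / q) + (i : ℕ) := by rw [this]
        rw [hXe, Nat.mul_add_mod, Nat.mod_eq_of_lt hiq]
      have hXnq : X % (n / q) = M * (p - 1) + r := by
        conv_lhs => rw [hnq]
        have hdc : y = p * (y / p) + (p - 1) := by rw [← hyp]; exact (Nat.div_add_mod y p).symm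
        have hXe : X = M * p * (y / p) + (M * (p - 1) + r) := by
          calc X = M * (p * (y / p) + (p - 1)) + r := by rw [hX, ← hdc]
            _ = M * p * (y / p) + (M * (p - 1) + r) := by ring
        have hlt : M * (p - 1) + r < M * p := by omega
        rw [hXe, Nat.mul_add_mod, Nat.mod_eq_of_lt hlt]
      have hkey := key ⟨X, hXn⟩
      have e1 : ∑ i' : Fin (n / p),
          g (Sum.inl i') * (if X % (n / p) = (i' : ℕ) then 1 else 0) = g (Sum.inl i) := by
        rw [hXnp]
        have := sum_pick (fun i' : Fin (n / p) => g (Sum.inl i')) (i : ℕ) i.2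
        simpa using this
      have e2 : ∑ i' : Fin (n / q - n / (p * q)),
          g (Sum.inr i') * (if X % (n / q) = (i' : ℕ) then 1 else 0) = 0 := by
        apply sum_pick_zero (fun i' => g (Sum.inr i'))
        rw [hXnq, hsub]
        omega
      simp only [Fin.val_mk] at hkey
      rw [e1, e2] at hkey
      simpa using hkey
    -- step 2 : all inr coefficients vanish
    have h2 : ∀ i : Fin (n / q - n / (p * q)), g (Sum.inr i) = 0 := by
      intro i
      have hilt : (i : ℕ) < n / q - n / (p * q) := i.2
      have hiq : (i : ℕ) < n / q := lt_of_lt_of_le hilt (Nat.sub_le _ _)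
      have hiN : (i : ℕ) < n := lt_of_lt_of_le hiq (Nat.div_le_self _ _)
      have hkey := key ⟨(i : ℕ), hiN⟩
      have hip : ((i : ℕ) : ℕ) % (n / p) = (i : ℕ) % (n / p) := rfl
      have e1 : ∑ i' : Fin (n / p),
          g (Sum.inl i') * (if (i : ℕ) % (n / p) = (i' : ℕ) then 1 else 0) = 0 := by
        have hlt : (i : ℕ) % (n / p) < n / p := Nat.mod_lt _ (by rw [hnp]; exact Nat.mul_pos hM0 hq.pos)
        have := sum_pick (fun i' : Fin (n / p) => g (Sum.inl i')) ((i : ℕ) % (n / p)) hlt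
        rw [this]
        exact h1 _
      have e2 : ∑ i' : Fin (n / q - n / (p * q)),
          g (Sum.inr i') * (if (i : ℕ) % (n / q) = (i' : ℕ) then 1 else 0) = g (Sum.inr i) := by
        have hmod : (i : ℕ) % (n / q) = (i : ℕ) := Nat.mod_eq_of_lt hiq
        rw [hmod]
        have := sum_pick (fun i' : Fin (n / q - n / (p * q)) => g (Sum.inr i')) (i : ℕ) i.2
        simpa using this
      simp only [Fin.val_mk] at hkey
      rw [e1, e2, zero_add] at hkey
      exact hkey
    intro k
    cases k with
    | inl i => exact h1 i
    | inr i => exact h2 i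
  refine ⟨hLI, ?_⟩
  -- SPAN = V
  -- the linear map f
  let f : (Fin n → ℚ) →ₗ[ℚ] ℂ :=
    { toFun := fun α => ∑ i : Fin n, (α i : ℂ) * ζ ^ (i : ℕ)
      map_add' := by
        intro x y
        simp only [Pi.add_apply]
        push_cast
        rw [← Finset.sum_add_distrib]
        exact Finset.sum_congr rfl fun i _ => by ring
      map_smul' := by
        intro c x
        simp only [Pi.smul_apply, smul_eq_mul, RingHom.id_apply, Rat.smul_def]
        push_cast
        rw [Finset.mul_sum]
        exact Finset.sum_congr rfl fun i _ => by ring }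
  have hVker : V = LinearMap.ker f := by
    ext α
    rw [hV, LinearMap.mem_ker]
    rfl
  have hle : Submodule.span ℚ (Set.range
      (Sum.elim (fun i : Fin (n / p) => cycVecQ n p (i : ℕ))
        (fun i : Fin (n / q - n / (p * q)) => cycVecQ n q (i : ℕ)))) ≤ V := by
    rw [Submodule.span_le]
    rintro _ ⟨k, rfl⟩
    cases k with
    | inl i =>
      rw [SetLike.mem_coe, hV]
      exact cyc_sum_zero n p i hn hp.one_lt hpn i.2 ζ hζ
    | inr i =>
      rw [SetLike.mem_coe, hV]
      exact cyc_sum_zero n q i hn hq.one_lt hqn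
        (lt_of_lt_of_le i.2 (Nat.sub_le _ _)) ζ hζ
  -- finrank of V ≤ n - φ(n)
  haveI : NeZero ((n : ℚ)) := ⟨Nat.cast_ne_zero.mpr hn.ne'⟩
  have hminpoly : (minpoly ℚ ζ).natDegree = n.totient := by
    rw [← hζ.minpoly_eq_cyclotomic_of_irreducible (Polynomial.cyclotomic.irreducible_rat hn),
      Polynomial.natDegree_cyclotomic]
  have hlin : LinearIndependent ℚ fun i : Fin n.totient => ζ ^ (i : ℕ) := by
    have h := linearIndependent_pow (K := ℚ) (S := ℂ) ζ
    rw [hminpoly] at h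
    exact h
  have hranged : n.totient ≤ Module.finrank ℚ (LinearMap.range f) := by
    have hspanle : Submodule.span ℚ (Set.range fun i : Fin n.totient => ζ ^ (i : ℕ)) ≤
        LinearMap.range f := by
      rw [Submodule.span_le]
      rintro _ ⟨i, rfl⟩
      refine ⟨stdVecQ n (i : ℕ), ?_⟩
      have hilt : (i : ℕ) < n := lt_of_lt_of_le i.2 (Nat.totient_le n)
      exact sum_std n (i : ℕ) hilt ζ
    calc n.totient
        = Module.finrank ℚ (Submodule.span ℚ (Set.range fun i : Fin n.totient => ζ ^ (i : ℕ))) := by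
          rw [finrank_span_eq_card hlin, Fintype.card_fin]
      _ ≤ Module.finrank ℚ (LinearMap.range f) := Submodule.finrank_mono hspanle
  have hrk := LinearMap.finrank_range_add_finrank_ker f
  rw [Module.finrank_pi, Fintype.card_fin] at hrk
  have hVle : Module.finrank ℚ V ≤ n - n.totient := by
    rw [hVker]; omega
  -- arithmetic: n - φ(n) = n/p + (n/q - n/(p*q))
  have hphi : n.totient = p ^ a * (p - 1) * (q ^ b * (q - 1)) := by
    rw [hn_eq, Nat.totient_mul (Nat.Coprime.pow (a + 1) (b + 1) hcpq), Nat.totient_prime_pow hp (Nat.succ_pos a),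
      Nat.totient_prime_pow hq (Nat.succ_pos b)]
    simp
  obtain ⟨p', rfl⟩ : ∃ p', p = p' + 1 := ⟨p - 1, by have := hp.pos; omega⟩
  obtain ⟨q', rfl⟩ : ∃ q', q = q' + 1 := ⟨q - 1, by have := hq.pos; omega⟩
  have hphi' : n.totient = M * p' * q' := by
    rw [hphi]; simp only [Nat.add_sub_cancel]; rw [hM]; ring
  have hneq' : n = M * p' * q' + M * p' + M * q' + M := by rw [hn_eq, hM]; ring
  have hcard : n / (p' + 1) + (n / (q' + 1) - n / ((p' + 1) * (q' + 1))) = n - n.totient := by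
    rw [hnp, hsub, hphi']
    have h1 : M * (q' + 1) = M * q' + M := by ring
    have h2 : M * (p' + 1) = M * p' + M := by ring
    omega
  -- conclude
  apply Submodule.eq_of_le_of_finrank_le hle
  rw [finrank_span_eq_card hLI]
  simp only [Fintype.card_sum, Fintype.card_fin]
  omega
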